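/- Let R_1 = Σ r'_n X^n ∈ F_2[[X]], where r'_0 = 0 and r'_n = r_n for n ≥ 1 (so R_1 = R + 1). The composition inverse U of R_1 satisfies (X^2 + 1)U^5 + (X^2 + X)U^4 + U^3 + (X^2 + 1)U + X^2 + X = 0. -/

import Mathlib

open PowerSeries Finset

/-- Composition `f(g(X))` of formal power series (meaningful when the
constant coefficient of `g` is zero). -/
noncomputable def PowerSeries.comp {R : Type*} [CommRing R]
    (f g : PowerSeries R) : PowerSeries R :=
  PowerSeries.mk fun n =>
    ∑ k ∈ Finset.range (n + 1), PowerSeries.coeff k f * PowerSeries.coeff n (g ^ k)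

section Comp
variable {A : Type*} [CommRing A]

lemma my_coeff_pow_zero (h : PowerSeries A) (hh : constantCoeff h = 0) {k n : ℕ} (hn : n < k) : coeff n (h ^ k) = 0 := by
  have hd : (X : PowerSeries A) ^ k ∣ h ^ k :=
    pow_dvd_pow_of_dvd (PowerSeries.X_dvd_iff.mpr hh) k
  exact PowerSeries.X_pow_dvd_iff.mp hd n hn

lemma my_coeff_comp (h : PowerSeries A) (hh : constantCoeff h = 0) (f : PowerSeries A) (n m : ℕ) (hm : n < m) :
    coeff n (f.comp h) = ∑ k ∈ range m, coeff k f * coeff n (h ^ k) := by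
  rw [PowerSeries.comp, coeff_mk]
  apply Finset.sum_subset
  · intro x hx; simp only [mem_range] at *; omega
  · intro k hk hk'
    simp only [mem_range] at hk hk'
    rw [my_coeff_pow_zero h hh (by omega), mul_zero]

lemma my_comp_add (h : PowerSeries A) (f g : PowerSeries A) :
    (f + g).comp h = f.comp h + g.comp h := by
  ext n
  simp [PowerSeries.comp, coeff_mk, add_mul, Finset.sum_add_distrib]

lemma my_comp_one (h : PowerSeries A) : (1 : PowerSeries A).comp h = 1 := by
  ext n
  rw [PowerSeries.comp, coeff_mk]
  rw [Finset.sum_eq_single 0]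
  · simp
  · intro k hk hk0; rw [PowerSeries.coeff_one, if_neg hk0, zero_mul]
  · simp

lemma my_comp_X (h : PowerSeries A) (hh : constantCoeff h = 0) : (X : PowerSeries A).comp h = h := by
  ext n
  rw [PowerSeries.comp, coeff_mk, Finset.sum_eq_single 1]
  · simp
  · intro k hk hk1; rw [PowerSeries.coeff_X, if_neg hk1, zero_mul]
  · intro h1; simp only [mem_range, not_lt] at h1
    have hn0 : n = 0 := by omega
    subst hn0
    simp [hh]

lemma triangle_sum {M : Type*} [AddCommMonoid M] (n : ℕ) (F : ℕ × ℕ → M)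
    (hF : ∀ p : ℕ × ℕ, n < p.1 + p.2 → F p = 0) :
    ∑ k ∈ range (n + 1), ∑ p ∈ Finset.HasAntidiagonal.antidiagonal k, F p
      = ∑ p ∈ range (n + 1) ×ˢ range (n + 1), F p := by
  rw [← Finset.sum_biUnion]
  · apply Finset.sum_subset
    · intro p hp
      simp only [Finset.mem_biUnion, mem_range, Finset.HasAntidiagonal.mem_antidiagonal] at hp
      obtain ⟨k, hk, hpk⟩ := hp
      simp only [Finset.mem_product, mem_range]
      omega
    · intro p hp hp'
      apply hF
      by_contra hc
      push_neg at hc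
      exact hp' (Finset.mem_biUnion.mpr ⟨p.1 + p.2, by simp only [mem_range]; omega,
        Finset.HasAntidiagonal.mem_antidiagonal.mpr rfl⟩)
  · intro a ha b hb hab
    simp only [Finset.disjoint_left]
    intro p hpa hpb
    simp only [Finset.HasAntidiagonal.mem_antidiagonal] at hpa hpb
    exact hab (hpa ▸ hpb ▸ rfl)

lemma my_comp_mul (h : PowerSeries A) (hh : constantCoeff h = 0) (f g : PowerSeries A) :
    (f * g).comp h = f.comp h * g.comp h := by
  ext n
  rw [my_coeff_comp h hh _ n (n + 1) (by omega), PowerSeries.coeff_mul]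
  have lhs_eq : ∑ k ∈ range (n + 1), coeff k (f * g) * coeff n (h ^ k)
      = ∑ k ∈ range (n + 1), ∑ p ∈ Finset.HasAntidiagonal.antidiagonal k,
          coeff p.1 f * coeff p.2 g * coeff n (h ^ (p.1 + p.2)) := by
    apply Finset.sum_congr rfl
    intro k _
    rw [PowerSeries.coeff_mul, Finset.sum_mul]
    apply Finset.sum_congr rfl
    intro p hp
    rw [Finset.HasAntidiagonal.mem_antidiagonal.mp hp]
  rw [lhs_eq, triangle_sum n _ (fun p hp => by
      rw [my_coeff_pow_zero h hh hp, mul_zero])]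
  rw [Finset.sum_product]
  have rhs_eq : ∑ p ∈ Finset.HasAntidiagonal.antidiagonal n, coeff p.1 (f.comp h) * coeff p.2 (g.comp h)
      = ∑ i ∈ range (n + 1), ∑ j ∈ range (n + 1),
          coeff i f * coeff j g *
            ∑ p ∈ Finset.HasAntidiagonal.antidiagonal n, coeff p.1 (h ^ i) * coeff p.2 (h ^ j) := by
    have step : ∀ p ∈ Finset.HasAntidiagonal.antidiagonal n,
        coeff p.1 (f.comp h) * coeff p.2 (g.comp h)
          = ∑ i ∈ range (n + 1), ∑ j ∈ range (n + 1),
              coeff i f * coeff j g * (coeff p.1 (h ^ i) * coeff p.2 (h ^ j)) := by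
      intro p hp
      have hp' := Finset.HasAntidiagonal.mem_antidiagonal.mp hp
      rw [my_coeff_comp h hh f p.1 (n + 1) (by omega),
        my_coeff_comp h hh g p.2 (n + 1) (by omega), Finset.sum_mul_sum]
      apply Finset.sum_congr rfl; intro i _
      apply Finset.sum_congr rfl; intro j _
      ring
    rw [Finset.sum_congr rfl step, Finset.sum_comm]
    apply Finset.sum_congr rfl; intro i _
    rw [Finset.sum_comm]
    apply Finset.sum_congr rfl; intro j _
    rw [← Finset.mul_sum]
  rw [rhs_eq]
  apply Finset.sum_congr rfl; intro i _
  apply Finset.sum_congr rfl; intro j _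
  rw [← PowerSeries.coeff_mul, ← pow_add]

end Comp

lemma my_sq (a : ℕ → ZMod 2) :
    (PowerSeries.mk a) * (PowerSeries.mk a)
      = PowerSeries.mk (fun n => if n % 2 = 0 then a (n / 2) else 0) := by
  ext n
  rw [PowerSeries.coeff_mul, coeff_mk]
  have hsplit := Finset.sum_filter_add_sum_filter_not (Finset.HasAntidiagonal.antidiagonal n)
    (fun p : ℕ × ℕ => p.1 = p.2)
    (fun p => (coeff p.1 (mk a)) * coeff p.2 (mk a))
  rw [← hsplit]
  have h1 : ∑ p ∈ (Finset.HasAntidiagonal.antidiagonal n).filter (fun p : ℕ × ℕ => ¬ p.1 = p.2),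
      (coeff p.1 (mk a)) * coeff p.2 (mk a) = 0 := by
    refine Finset.sum_involution (fun p _ => p.swap) ?_ ?_ ?_ ?_
    · intro p hp
      simp only [Prod.fst_swap, Prod.snd_swap]
      rw [mul_comm]
      exact CharTwo.add_self_eq_zero _
    · intro p hp _
      simp only [Finset.mem_filter] at hp
      intro hc
      exact hp.2 (by simpa using congrArg Prod.fst hc.symm)
    · intro p hp
      simp only [Finset.mem_filter, Finset.HasAntidiagonal.mem_antidiagonal] at hp
      simp only [Finset.mem_filter, Finset.HasAntidiagonal.mem_antidiagonal, Prod.fst_swap, Prod.snd_swap]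
      exact ⟨by omega, fun h => hp.2 h.symm⟩
    · intro p _; exact Prod.swap_swap p
  rw [h1, add_zero]
  have h2 : (Finset.HasAntidiagonal.antidiagonal n).filter (fun p : ℕ × ℕ => p.1 = p.2)
      = if n % 2 = 0 then {(n / 2, n / 2)} else ∅ := by
    split_ifs with he
    · ext p
      simp only [Finset.mem_filter, Finset.HasAntidiagonal.mem_antidiagonal, Finset.mem_singleton, Prod.ext_iff]
      omega
    · ext p
      simp only [Finset.mem_filter, Finset.HasAntidiagonal.mem_antidiagonal, Finset.notMem_empty, iff_false,
        not_and]
      omega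
  rw [h2]
  split_ifs with he
  · rw [Finset.sum_singleton, coeff_mk]
    have hx : ∀ x : ZMod 2, x * x = x := by decide
    rw [hx]
  · simp


lemma key_scalar (r : ℕ → ZMod 2)
    (h2 : ∀ n, r (2 * n) = r n)
    (h41 : ∀ n, r (4 * n + 1) = r n)
    (h43 : ∀ n, r (4 * n + 3) = 1 + r (2 * n + 1)) (n : ℕ) :
    ((((((if n % 2 = 0 then r (n / 2) else 0)
      + if 1 ≤ n then if (n - 1) % 2 = 0 then r ((n - 1) / 2) else 0 else 0)
      + if 4 ≤ n then if (n - 4) % 2 = 0 then r ((n - 4) / 2) else 0 else 0)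
      + if 5 ≤ n then if (n - 5) % 2 = 0 then r ((n - 5) / 2) else 0 else 0)
      + r n + if 4 ≤ n then r (n - 4) else 0) + if n = 3 then 1 else 0) = 0 := by
  rcases Nat.lt_or_ge n 5 with h5 | h5
  · have e1 : r 1 = r 0 := by have := h41 0; norm_num at this; exact this
    have e2 : r 2 = r 1 := by have := h2 1; norm_num at this; exact this
    have e3 : r 3 = 1 + r 1 := by have := h43 0; norm_num at this; exact this
    have e4 : r 4 = r 2 := by have := h2 2; norm_num at this; exact this
    interval_cases n <;> norm_num [e1, e2, e3, e4] <;>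
      · generalize r 0 = a
        revert a
        decide
  · obtain ⟨m, rfl⟩ : ∃ m, n = m + 5 := ⟨n - 5, by omega⟩
    obtain ⟨q, hq⟩ : ∃ q, m = 4*q ∨ m = 4*q+1 ∨ m = 4*q+2 ∨ m = 4*q+3 :=
      ⟨m / 4, by omega⟩
    rcases hq with h | h | h | h <;> subst h <;>
        split_ifs <;> try (exfalso; omega)
    · -- n = 4q+5
      rw [show (4*q+5-1)/2 = 2*(q+1) from by omega, show (4*q+5-5)/2 = 2*q from by omega]
      have e3 : r (4*q+5) = r (q+1) := by
        have := h41 (q+1); rw [show 4*(q+1)+1 = 4*q+5 from by ring] at this; exact this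
      have e4 : r (4*q+5-4) = r q := by rw [show 4*q+5-4 = 4*q+1 from by omega]; exact h41 q
      rw [h2 (q+1), h2 q, e3, e4]
      generalize r (q+1) = a; generalize r q = b
      revert a b; decide
    · -- n = 4q+6
      rw [show (4*q+1+5)/2 = 2*q+3 from by omega, show (4*q+1+5-4)/2 = 2*q+1 from by omega]
      have e1 : r (4*q+1+5) = r (2*q+3) := by
        have := h2 (2*q+3); rw [show 2*(2*q+3) = 4*q+1+5 from by ring] at this; exact this
      have e2 : r (4*q+1+5-4) = r (2*q+1) := by
        have := h2 (2*q+1); rw [show 2*(2*q+1) = 4*q+2 from by ring] at this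
        rw [show 4*q+1+5-4 = 4*q+2 from by omega]; exact this
      rw [e1, e2]
      generalize r (2*q+3) = a; generalize r (2*q+1) = b
      revert a b; decide
    · -- n = 4q+7
      rw [show (4*q+2+5-1)/2 = 2*q+3 from by omega, show (4*q+2+5-5)/2 = 2*q+1 from by omega]
      have e1 : r (4*q+2+5) = 1 + r (2*q+3) := by
        have := h43 (q+1)
        rw [show 4*(q+1)+3 = 4*q+2+5 from by ring, show 2*(q+1)+1 = 2*q+3 from by ring] at this
        exact this
      have e2 : r (4*q+2+5-4) = 1 + r (2*q+1) := by
        rw [show 4*q+2+5-4 = 4*q+3 from by omega]; exact h43 q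
      rw [e1, e2]
      generalize r (2*q+3) = a; generalize r (2*q+1) = b
      revert a b; decide
    · -- n = 4q+8
      rw [show (4*q+3+5)/2 = 2*q+4 from by omega, show (4*q+3+5-4)/2 = 2*q+2 from by omega]
      have e1 : r (4*q+3+5) = r (2*q+4) := by
        have := h2 (2*q+4); rw [show 2*(2*q+4) = 4*q+3+5 from by ring] at this; exact this
      have e2 : r (4*q+3+5-4) = r (2*q+2) := by
        have := h2 (2*q+2); rw [show 2*(2*q+2) = 4*q+4 from by ring] at this
        rw [show 4*q+3+5-4 = 4*q+4 from by omega]; exact this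
      rw [e1, e2]
      generalize r (2*q+4) = a; generalize r (2*q+2) = b
      revert a b; decide


lemma my_comp_zero {A : Type*} [CommRing A] (h : PowerSeries A) :
    (0 : PowerSeries A).comp h = 0 := by
  ext n; simp [PowerSeries.comp]

lemma my_comp_pow {A : Type*} [CommRing A] (h : PowerSeries A)
    (hh : constantCoeff h = 0) (f : PowerSeries A) (k : ℕ) :
    (f ^ k).comp h = (f.comp h) ^ k := by
  induction k with
  | zero => simpa using my_comp_one h
  | succ k ih => rw [pow_succ, my_comp_mul h hh, ih, pow_succ]

theorem rudin_shapiro_prime_inverse_equation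
    (r : ℕ → ZMod 2) (h0 : r 0 = 1)
    (h2 : ∀ n, r (2 * n) = r n)
    (h41 : ∀ n, r (4 * n + 1) = r n)
    (h43 : ∀ n, r (4 * n + 3) = 1 + r (2 * n + 1))
    (R R₁ U : PowerSeries (ZMod 2))
    (hR : R = PowerSeries.mk r) (hR1 : R₁ = R + 1)
    (hU0 : PowerSeries.constantCoeff U = 0)
    (hRU : PowerSeries.comp R₁ U = PowerSeries.X)
    (hUR : PowerSeries.comp U R₁ = PowerSeries.X) :
    (PowerSeries.X ^ 2 + 1) * U ^ 5 + (PowerSeries.X ^ 2 + PowerSeries.X) * U ^ 4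
      + U ^ 3 + (PowerSeries.X ^ 2 + 1) * U
      + PowerSeries.X ^ 2 + PowerSeries.X = 0 := by
  have htwo : (2 : PowerSeries (ZMod 2)) = 0 := by
    rw [show (2 : PowerSeries (ZMod 2)) = PowerSeries.C (2 : ZMod 2) from (map_ofNat _ 2).symm,
      show (2 : ZMod 2) = 0 from rfl, map_zero]
  have E' : R * R + X^1 * (R*R) + X^4 * (R*R) + X^5 * (R*R) + R + X^4 * R + X^3 = 0 := by
    rw [hR, my_sq]
    ext n
    simp only [map_add, PowerSeries.coeff_X_pow_mul', coeff_mk, PowerSeries.coeff_X_pow, map_zero]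
    exact key_scalar r h2 h41 h43 n
  have hRR : R = R₁ + 1 := by rw [hR1]; linear_combination -htwo
  have hcompR : PowerSeries.comp R U = PowerSeries.X + 1 := by
    rw [hRR, my_comp_add, hRU, my_comp_one]
  have E2 := congrArg (fun f => PowerSeries.comp f U) E'
  simp only [my_comp_add, my_comp_mul U hU0, my_comp_pow U hU0, my_comp_X U hU0,
    my_comp_zero, hcompR] at E2
  linear_combination E2 - (X*U^5 + (X+1)*U^4 + X*U + X + 1) * htwo
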